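/- arXiv:1803.01704 — 2 statements merged into one kernel-verified Lean document; each statement's English description precedes it below -/
import Mathlib

section
/- Let b, c, e be real (or complex) parameters with e not a nonpositive integer, and let z(x,y) = Ξ₂(b,c;e;x,y). Then on the domain |x| < 1 (all y), z satisfies the partial differential equation y z_yy + x z_xy + e z_y - z = 0. -/
noncomputable section

/-- The Pochhammer symbol `(a)_k = a (a+1) ⋯ (a+k-1)`. -/
def poch (a : ℝ) (k : ℕ) : ℝ := ∏ i ∈ Finset.range k, (a + i)
/-- The Humbert confluent hypergeometric function
`Ξ₂(a,b;d;u,w) = ∑_{m,n≥0} (a)_m (b)_m / (m! n! (d)_{m+n}) u^m w^n`. -/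
def Xi2 (a b d u w : ℝ) : ℝ :=
  ∑' mn : ℕ × ℕ,
    poch a mn.1 * poch b mn.1 /
      (mn.1.factorial * mn.2.factorial * poch d (mn.1 + mn.2)) * u ^ mn.1 * w ^ mn.2

/-! ### Auxiliary definitions and lemmas -/

/-- The coefficient of `u^m w^n` in the Humbert series. -/
def Acoef (b c e : ℝ) (mn : ℕ × ℕ) : ℝ :=
  poch b mn.1 * poch c mn.1 /
    (mn.1.factorial * mn.2.factorial * poch e (mn.1 + mn.2))

lemma poch_succ (a : ℝ) (k : ℕ) : poch a (k+1) = poch a k * (a + k) :=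
  Finset.prod_range_succ _ _


lemma poch_ne_zero {e : ℝ} (he : ∀ k : ℕ, e ≠ -(k : ℝ)) (k : ℕ) : poch e k ≠ 0 := by
  apply Finset.prod_ne_zero_iff.2
  intro i _
  intro h
  exact he i (by linarith)


lemma pochstep (t : ℝ) (ht : 0 ≤ t) (B : ℕ) :
    (t+1)^B * ((B:ℝ) + t) ≤ (t+1) * (t+2)^B := by
  induction B with
  | zero => simpa using by linarith
  | succ B ih =>
      have h1 : (t+1)^(B+1) * ((B:ℝ)+1+t) = (t+1) * ((t+1)^B * ((B:ℝ)+t)) + (t+1)^(B+1) := by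
        ring
      have h2 : (t+1)^(B+1) ≤ (t+1) * (t+2)^B := by
        have := pow_le_pow_left₀ (by linarith) (show t+1 ≤ t+2 by linarith) B
        calc (t+1)^(B+1) = (t+1) * (t+1)^B := by ring
        _ ≤ (t+1) * (t+2)^B := by nlinarith [pow_nonneg (show (0:ℝ) ≤ t+1 by linarith) B]
      have h3 : (t+1) * ((t+1)^B * ((B:ℝ)+t)) ≤ (t+1) * ((t+1) * (t+2)^B) := by
        nlinarith [pow_nonneg (show (0:ℝ) ≤ t+1 by linarith) B,
          pow_nonneg (show (0:ℝ) ≤ t+2 by linarith) B]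
      have : ((B:ℕ)+1 : ℝ) + t = (B:ℝ)+1+t := by push_cast; ring
      rw [show ((B+1:ℕ):ℝ) = (B:ℝ)+1 by push_cast; ring]
      calc (t+1)^(B+1) * ((B:ℝ)+1+t) = (t+1) * ((t+1)^B * ((B:ℝ)+t)) + (t+1)^(B+1) := h1
      _ ≤ (t+1) * ((t+1) * (t+2)^B) + (t+1)*(t+2)^B := by linarith
      _ = (t+1) * (t+2)^(B+1) := by ring


lemma poch_abs_le (a : ℝ) (B : ℕ) (hB : |a| ≤ B) (m : ℕ) :
    |poch a m| ≤ m.factorial * ((m:ℝ)+1)^B := by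
  induction m with
  | zero => simp [poch]
  | succ m ih =>
      rw [poch_succ, abs_mul]
      have h1 : |a + m| ≤ (B:ℝ) + m := by
        calc |a + m| ≤ |a| + m := by
              have := abs_add_le a (m:ℝ)
              simpa using this.trans (by simp)
        _ ≤ (B:ℝ) + m := by linarith
      have h2 : |poch a m| * |a + m| ≤ (m.factorial * ((m:ℝ)+1)^B) * ((B:ℝ)+m) := by
        apply mul_le_mul ih h1 (abs_nonneg _)
        positivity
      refine h2.trans ?_
      have h3 := pochstep (m:ℝ) (by positivity) B
      have hfac : (0:ℝ) ≤ m.factorial := by positivity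
      calc (m.factorial * ((m:ℝ)+1)^B) * ((B:ℝ)+m)
          = (m.factorial:ℝ) * (((m:ℝ)+1)^B * ((B:ℝ)+m)) := by ring
      _ ≤ (m.factorial:ℝ) * (((m:ℝ)+1) * ((m:ℝ)+2)^B) := by
            apply mul_le_mul_of_nonneg_left h3 hfac
      _ = ((m+1).factorial : ℝ) * (((m:ℝ)+1)+1)^B := by
            rw [Nat.factorial_succ]; push_cast; ring
      _ = ((m+1).factorial : ℝ) * (((m+1:ℕ):ℝ)+1)^B := by norm_num

lemma poch_lower {e : ℝ} (he : ∀ k : ℕ, e ≠ -(k : ℝ)) {s : ℝ} (hs0 : 0 < s) (hs1 : s < 1) :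
    ∃ c₀ > 0, ∀ k : ℕ, c₀ * (s^k * k.factorial) ≤ |poch e k| := by
  set K : ℕ := ⌈(s + |e|) / (1 - s)⌉₊ + 1 with hK
  have hKprop : ∀ k : ℕ, K ≤ k → s * ((k:ℝ)+1) ≤ |e + k| := by
    intro k hk
    have h1 : (s + |e|) / (1 - s) ≤ (k:ℝ) := by
      calc (s + |e|) / (1 - s) ≤ (⌈(s + |e|) / (1 - s)⌉₊ : ℝ) := Nat.le_ceil _
      _ ≤ (K:ℝ) := by rw [hK]; push_cast; linarith
      _ ≤ (k:ℝ) := by exact_mod_cast hk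
    have h2 : s + |e| ≤ (k:ℝ) * (1 - s) := by
      rw [div_le_iff₀ (by linarith)] at h1; linarith
    have h3 : (k:ℝ) - |e| ≤ |e + k| := by
      have h := abs_sub_abs_le_abs_sub ((k:ℝ)) (-e)
      rw [abs_neg, sub_neg_eq_add] at h
      have hk' : |(k:ℝ)| = (k:ℝ) := abs_of_nonneg (by positivity)
      rw [hk', add_comm] at h
      exact h
    nlinarith
  -- minimum of the first K+1 ratios
  have hne : (Finset.range (K+1)).Nonempty := ⟨0, by simp⟩
  set c₀ : ℝ := (Finset.range (K+1)).inf' hne (fun k => |poch e k| / (s^k * k.factorial)) with hc₀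
  have hpos : 0 < c₀ := by
    rw [hc₀, Finset.lt_inf'_iff]
    intro k _
    have h1 : 0 < |poch e k| := abs_pos.2 (poch_ne_zero he k)
    positivity
  refine ⟨c₀, hpos, ?_⟩
  have hbase : ∀ k, k ≤ K → c₀ * (s^k * k.factorial) ≤ |poch e k| := by
    intro k hk
    have h1 : c₀ ≤ |poch e k| / (s^k * k.factorial) :=
      Finset.inf'_le _ (by simp [Finset.mem_range]; omega)
    have h2 : (0:ℝ) < s^k * k.factorial := by positivity
    rw [le_div_iff₀ h2] at h1
    linarith
  have hstep : ∀ j : ℕ, c₀ * (s^(K+j) * (K+j).factorial) ≤ |poch e (K+j)| := by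
    intro j
    induction j with
    | zero => exact hbase K (le_refl K)
    | succ j ih =>
        have hKj : K ≤ K + j := Nat.le_add_right _ _
        have h1 : s * (((K+j:ℕ):ℝ) + 1) ≤ |e + ((K+j:ℕ):ℝ)| := hKprop (K+j) hKj
        have h2 : |poch e (K+j+1)| = |poch e (K+j)| * |e + (K+j:ℕ)| := by
          rw [show K+j+1 = (K+j)+1 from rfl, poch_succ, abs_mul]
        rw [show K+(j+1) = (K+j)+1 from rfl, h2]
        have h3 : c₀ * (s^((K+j)+1) * ((K+j)+1).factorial)
            = (c₀ * (s^(K+j) * (K+j).factorial)) * (s * (((K+j):ℕ)+1)) := by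
          rw [Nat.factorial_succ]; push_cast; ring
        rw [h3]
        apply mul_le_mul ih _ (by positivity) (abs_nonneg _)
        push_cast at h1 ⊢
        nlinarith
  intro k
  by_cases h : k ≤ K
  · exact hbase k h
  · have : k = K + (k - K) := by omega
    rw [this]; exact hstep (k - K)

-- (n+1)^p * n! ≤ (n+p)!
lemma pow_mul_factorial_le (p n : ℕ) :
    ((n:ℝ)+1)^p * n.factorial ≤ (n+p).factorial := by
  induction p with
  | zero => simp
  | succ p ih =>
      have h1 : ((n:ℝ)+1)^(p+1) * n.factorial = ((n:ℝ)+1) * (((n:ℝ)+1)^p * n.factorial) := by ring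
      rw [h1]
      have h2 : ((n:ℝ)+1) * (((n:ℝ)+1)^p * n.factorial) ≤ ((n:ℝ)+1) * (n+p).factorial := by
        apply mul_le_mul_of_nonneg_left ih (by positivity)
      refine h2.trans ?_
      have h3 : (n+(p+1)).factorial = (n+p+1) * (n+p).factorial := by
        rw [show n+(p+1) = (n+p)+1 from rfl, Nat.factorial_succ]
      rw [h3]
      push_cast
      have : ((n:ℝ)+1) ≤ ((n:ℝ)+(p:ℝ)+1) := by linarith [Nat.cast_nonneg (α := ℝ) p]
      nlinarith [(show (0:ℝ) < (n+p).factorial by positivity), this]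

-- (n+p)! ≤ 2^(n+p) * n! * p!
lemma factorial_add_le (p n : ℕ) :
    ((n+p).factorial : ℝ) ≤ 2^(n+p) * n.factorial * p.factorial := by
  have h1 : (n+p).choose p * p.factorial * n.factorial = (n+p).factorial := by
    have := Nat.choose_mul_factorial_mul_factorial (Nat.le_add_left p n)
    simpa [Nat.add_sub_cancel] using this
  have h2 : (n+p).choose p ≤ 2^(n+p) := by
    calc (n+p).choose p ≤ ∑ m ∈ Finset.range (n+p+1), (n+p).choose m :=
          Finset.single_le_sum (fun i _ => Nat.zero_le _) (by simp [Finset.mem_range])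
    _ = 2^(n+p) := Nat.sum_range_choose _
  have := Nat.mul_le_mul_right (p.factorial * n.factorial) h2
  calc ((n+p).factorial : ℝ) = ((n+p).choose p * p.factorial * n.factorial : ℕ) := by
        exact_mod_cast h1.symm
  _ ≤ ((2^(n+p) * (p.factorial * n.factorial) : ℕ) : ℝ) := by
        exact_mod_cast (by nlinarith [h1, this] : (n+p).choose p * p.factorial * n.factorial ≤ 2^(n+p) * (p.factorial * n.factorial))
  _ = 2^(n+p) * n.factorial * p.factorial := by push_cast; ring

-- summable: (n+1)^p * t^n, 0 ≤ t < 1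
lemma summable_poly_geom (p : ℕ) {t : ℝ} (ht0 : 0 < t) (ht1 : t < 1) :
    Summable (fun n : ℕ => ((n:ℝ)+1)^p * t^n) := by
  have h0 : Summable (fun n : ℕ => (n:ℝ)^p * t^n) :=
    summable_pow_mul_geometric_of_norm_lt_one p (by rwa [Real.norm_eq_abs, abs_of_pos ht0])
  have h1 : Summable (fun n : ℕ => ((n:ℝ)+1)^p * t^(n+1)) := by
    have := h0.comp_injective Nat.succ_injective
    refine this.congr fun n => ?_
    simp only [Function.comp_apply, Nat.succ_eq_add_one]
    push_cast
    ring
  have h2 := h1.mul_left (1/t)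
  refine h2.congr fun n => ?_
  field_simp
  ring

-- summable: (n+1)^p * v^n / n!, 0 ≤ v
lemma summable_poly_exp (p : ℕ) {v : ℝ} (hv : 0 ≤ v) :
    Summable (fun n : ℕ => ((n:ℝ)+1)^p * v^n / n.factorial) := by
  have key : ∀ n : ℕ, ((n:ℝ)+1)^p * v^n / n.factorial
      ≤ (2^p * p.factorial) * ((2*v)^n / n.factorial) := by
    intro n
    have h1 : ((n:ℝ)+1)^p ≤ 2^(n+p) * p.factorial := by
      have a := pow_mul_factorial_le p n
      have b := factorial_add_le p n
      have hf : (0:ℝ) < n.factorial := by positivity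
      have : ((n:ℝ)+1)^p * n.factorial ≤ 2^(n+p) * n.factorial * p.factorial := a.trans b
      calc ((n:ℝ)+1)^p = (((n:ℝ)+1)^p * n.factorial) / n.factorial := by field_simp
      _ ≤ (2^(n+p) * n.factorial * p.factorial) / n.factorial := by gcongr
      _ = 2^(n+p) * p.factorial := by field_simp
    have hf : (0:ℝ) < n.factorial := by positivity
    have hvn : (0:ℝ) ≤ v^n := by positivity
    calc ((n:ℝ)+1)^p * v^n / n.factorial ≤ (2^(n+p) * p.factorial) * v^n / n.factorial := by
          gcongr
    _ = (2^p * p.factorial) * ((2*v)^n / n.factorial) := by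
          rw [pow_add, mul_pow]
          field_simp
  apply Summable.of_nonneg_of_le (fun n => by positivity) key
  exact ((Real.summable_pow_div_factorial (2*v)).mul_left _)

lemma master (b c e : ℝ) (he : ∀ k : ℕ, e ≠ -(k : ℝ)) (p : ℕ) {q r : ℝ}
    (hq0 : 0 < q) (hq1 : q < 1) (hr : 0 ≤ r) :
    Summable (fun mn : ℕ × ℕ =>
      ((mn.1:ℝ)+mn.2+1)^p * |Acoef b c e mn| * q^mn.1 * r^mn.2) := by
  obtain ⟨s, hs0, hqs, hs1⟩ : ∃ s : ℝ, 0 < s ∧ q < s ∧ s < 1 :=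
    ⟨(1+q)/2, by linarith, by linarith, by linarith⟩
  obtain ⟨c₀, hc₀, hlow⟩ := poch_lower he hs0 hs1
  set B : ℕ := ⌈|b|⌉₊ with hB
  set C : ℕ := ⌈|c|⌉₊ with hC
  have hBb : |b| ≤ B := Nat.le_ceil _
  have hCc : |c| ≤ C := Nat.le_ceil _
  -- majorant
  set f : ℕ → ℝ := fun m => ((m:ℝ)+1)^(p+B+C) * (q/s)^m with hf
  set g : ℕ → ℝ := fun n => ((n:ℝ)+1)^p * (r/s)^n / n.factorial with hg
  have hfs : Summable f := summable_poly_geom _ (by positivity) ((div_lt_one hs0).2 hqs)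
  have hgs : Summable g := summable_poly_exp _ (by positivity)
  have hprod : Summable (fun mn : ℕ × ℕ => (1/c₀) * (f mn.1 * g mn.2)) := by
    apply Summable.mul_left
    apply Summable.mul_of_nonneg hfs hgs
    · intro m; simp only [hf]; positivity
    · intro n; simp only [hg]; positivity
  apply Summable.of_nonneg_of_le (fun mn => by positivity) _ hprod
  rintro ⟨m, n⟩
  simp only
  -- abbreviations
  have hPpos : 0 < |poch e (m+n)| := abs_pos.2 (poch_ne_zero he (m+n))
  have hlow' := hlow (m+n)
  have hfacmn : (m.factorial * n.factorial : ℝ) ≤ (m+n).factorial := by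
    exact_mod_cast Nat.le_of_dvd (Nat.factorial_pos _) (Nat.factorial_mul_factorial_dvd_factorial_add m n)
  have hA : |Acoef b c e (m, n)| =
      |poch b m| * |poch c m| / (m.factorial * n.factorial * |poch e (m+n)|) := by
    rw [Acoef]
    rw [abs_div, abs_mul]
    congr 1
    rw [abs_mul, abs_mul]
    congr 2
    · exact abs_of_pos (by positivity)
    · exact abs_of_pos (by positivity)
  -- numerator and denominator bounds
  have hnum : ((m:ℝ)+n+1)^p * (|poch b m| * |poch c m|) * q^m * r^n ≤
      (((m:ℝ)+1)^p * ((n:ℝ)+1)^p) *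
        ((m.factorial * ((m:ℝ)+1)^B) * (m.factorial * ((m:ℝ)+1)^C)) * q^m * r^n := by
    have h1 : ((m:ℝ)+n+1)^p ≤ ((m:ℝ)+1)^p * ((n:ℝ)+1)^p := by
      rw [← mul_pow]
      apply pow_le_pow_left₀ (by positivity)
      nlinarith [Nat.cast_nonneg (α := ℝ) m, Nat.cast_nonneg (α := ℝ) n]
    have h2 := mul_le_mul (poch_abs_le b B hBb m) (poch_abs_le c C hCc m)
      (abs_nonneg _) (by positivity)
    apply mul_le_mul_of_nonneg_right _ (by positivity)
    apply mul_le_mul_of_nonneg_right _ (by positivity)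
    exact mul_le_mul h1 h2 (by positivity) (by positivity)
  have hden : (m.factorial : ℝ) * n.factorial * (c₀ * (s^(m+n) * (m.factorial * n.factorial)))
      ≤ m.factorial * n.factorial * |poch e (m+n)| := by
    apply mul_le_mul_of_nonneg_left _ (by positivity)
    refine le_trans ?_ hlow'
    apply mul_le_mul_of_nonneg_left _ hc₀.le
    apply mul_le_mul_of_nonneg_left hfacmn (by positivity)
  -- main calc
  have key : ((m:ℝ)+n+1)^p * |Acoef b c e (m, n)| * q^m * r^n ≤
      (1/c₀) * (f m * g n) := by
    rw [hA]
    have hW : ((m:ℝ)+n+1)^p * (|poch b m| * |poch c m| /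
        (m.factorial * n.factorial * |poch e (m+n)|)) * q^m * r^n
        = (((m:ℝ)+n+1)^p * (|poch b m| * |poch c m|) * q^m * r^n) /
          (m.factorial * n.factorial * |poch e (m+n)|) := by ring
    rw [hW]
    have hd0 : (0:ℝ) < (m.factorial : ℝ) * n.factorial * (c₀ * (s^(m+n) * (m.factorial * n.factorial))) := by
      positivity
    refine le_trans (div_le_div₀ (by positivity) hnum hd0 hden) ?_
    have hfac1 : (1:ℝ) ≤ n.factorial := by exact_mod_cast (Nat.factorial_pos n)
    have hs' : s ≠ 0 := ne_of_gt hs0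
    have hc' : c₀ ≠ 0 := ne_of_gt hc₀
    have hnf : (n.factorial : ℝ) ≠ 0 := by positivity
    have hmf : (m.factorial : ℝ) ≠ 0 := by positivity
    have hEq : (1/c₀) * (f m * g n) =
        ((((m:ℝ)+1)^p * ((n:ℝ)+1)^p *
          ((m.factorial * ((m:ℝ)+1)^B) * (m.factorial * ((m:ℝ)+1)^C)) * q^m * r^n) /
         ((m.factorial : ℝ) * n.factorial * (c₀ * (s^(m+n) * (m.factorial * n.factorial)))))
          * n.factorial := by
      simp only [hf, hg]
      rw [div_pow, div_pow, pow_add, pow_add]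
      field_simp
      ring
    rw [hEq]
    apply le_mul_of_one_le_right (by positivity) hfac1
  exact key

-- helper inequality: t^(n-j) ≤ R^n when 0 ≤ t ≤ R, 1 ≤ R
lemma pow_sub_le {t R : ℝ} (h0 : 0 ≤ t) (h1 : t ≤ R) (hR : 1 ≤ R) (n j : ℕ) :
    t^(n-j) ≤ R^n :=
  le_trans (pow_le_pow_left₀ h0 h1 _) (pow_le_pow_right₀ hR (Nat.sub_le n j))

/-- first derivative helper -/
lemma deriv1 (coeff : ℕ × ℕ → ℝ)
    (hgood : ∀ (p : ℕ) (r : ℝ), 0 ≤ r →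
      Summable (fun mn : ℕ × ℕ => ((mn.2:ℝ)+1)^p * |coeff mn| * r^mn.2))
    (y₀ : ℝ) :
    HasDerivAt (fun t : ℝ => ∑' mn : ℕ × ℕ, coeff mn * t^mn.2)
      (∑' mn : ℕ × ℕ, coeff mn * ((mn.2:ℝ) * y₀^(mn.2-1))) y₀ := by
  set R : ℝ := |y₀| + 1 with hRdef
  have hR1 : 1 ≤ R := by rw [hRdef]; linarith [abs_nonneg y₀]
  have hR0 : 0 ≤ R := by linarith
  have hy₀ : y₀ ∈ Metric.ball (0:ℝ) R := by
    simp [Real.dist_eq, hRdef]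
  have hmem : ∀ t ∈ Metric.ball (0:ℝ) R, |t| ≤ R := by
    intro t ht
    simp only [Metric.mem_ball, Real.dist_eq, sub_zero] at ht
    exact ht.le
  apply hasDerivAt_tsum_of_isPreconnected
    (u := fun mn : ℕ × ℕ => ((mn.2:ℝ)+1)^1 * |coeff mn| * R^mn.2)
    (hgood 1 R hR0) Metric.isOpen_ball (convex_ball (0:ℝ) R).isPreconnected
    (fun mn t _ => (hasDerivAt_pow mn.2 t).const_mul (coeff mn))
    ?_ hy₀ ?_ hy₀
  · rintro ⟨m, n⟩ t ht
    simp only [Real.norm_eq_abs, abs_mul]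
    have h1 : |(n:ℝ)| = (n:ℝ) := abs_of_nonneg (by positivity)
    have h2 : |t^(n-1)| ≤ R^n := by
      rw [abs_pow]; exact pow_sub_le (abs_nonneg t) (hmem t ht) hR1 n 1
    have h3 : |(n:ℝ)| * |t^(n-1)| ≤ ((n:ℝ)+1)^1 * R^n := by
      rw [h1, pow_one]
      apply mul_le_mul (by linarith) h2 (abs_nonneg _) (by linarith [Nat.cast_nonneg (α := ℝ) n])
    calc |coeff (m,n)| * (|(n:ℝ)| * |t^(n-1)|)
        ≤ |coeff (m,n)| * (((n:ℝ)+1)^1 * R^n) :=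
          mul_le_mul_of_nonneg_left h3 (abs_nonneg _)
    _ = ((n:ℝ)+1)^1 * |coeff (m,n)| * R^n := by ring
  · apply Summable.of_norm_bounded (hgood 0 R hR0)
    rintro ⟨m, n⟩
    simp only [Real.norm_eq_abs, abs_mul, pow_zero, one_mul, abs_pow]
    apply mul_le_mul_of_nonneg_left _ (abs_nonneg _)
    exact pow_sub_le (abs_nonneg _) (hmem y₀ hy₀) hR1 n 0

/-- second derivative helper -/
lemma deriv2 (coeff : ℕ × ℕ → ℝ)
    (hgood : ∀ (p : ℕ) (r : ℝ), 0 ≤ r →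
      Summable (fun mn : ℕ × ℕ => ((mn.2:ℝ)+1)^p * |coeff mn| * r^mn.2))
    (y₀ : ℝ) :
    HasDerivAt (fun t : ℝ => ∑' mn : ℕ × ℕ, coeff mn * ((mn.2:ℝ) * t^(mn.2-1)))
      (∑' mn : ℕ × ℕ, coeff mn * ((mn.2:ℝ) * (((mn.2-1:ℕ):ℝ) * y₀^(mn.2-1-1)))) y₀ := by
  set R : ℝ := |y₀| + 1 with hRdef
  have hR1 : 1 ≤ R := by rw [hRdef]; linarith [abs_nonneg y₀]
  have hR0 : 0 ≤ R := by linarith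
  have hy₀ : y₀ ∈ Metric.ball (0:ℝ) R := by
    simp [Real.dist_eq, hRdef]
  have hmem : ∀ t ∈ Metric.ball (0:ℝ) R, |t| ≤ R := by
    intro t ht
    simp only [Metric.mem_ball, Real.dist_eq, sub_zero] at ht
    exact ht.le
  apply hasDerivAt_tsum_of_isPreconnected
    (u := fun mn : ℕ × ℕ => ((mn.2:ℝ)+1)^2 * |coeff mn| * R^mn.2)
    (hgood 2 R hR0) Metric.isOpen_ball (convex_ball (0:ℝ) R).isPreconnected
    (fun mn t _ => ((hasDerivAt_pow (mn.2-1) t).const_mul ((mn.2:ℝ))).const_mul (coeff mn))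
    ?_ hy₀ ?_ hy₀
  · rintro ⟨m, n⟩ t ht
    simp only [Real.norm_eq_abs, abs_mul]
    have h1 : |(n:ℝ)| = (n:ℝ) := abs_of_nonneg (by positivity)
    have h1' : |((n-1:ℕ):ℝ)| = ((n-1:ℕ):ℝ) := abs_of_nonneg (by positivity)
    have h2 : |t^(n-1-1)| ≤ R^n := by
      rw [abs_pow, Nat.sub_sub]; exact pow_sub_le (abs_nonneg t) (hmem t ht) hR1 n 2
    have hn1 : ((n-1:ℕ):ℝ) ≤ (n:ℝ)+1 := by
      have := Nat.sub_le n 1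
      calc ((n-1:ℕ):ℝ) ≤ (n:ℝ) := by exact_mod_cast this
      _ ≤ (n:ℝ)+1 := by linarith
    have h3 : |(n:ℝ)| * (|((n-1:ℕ):ℝ)| * |t^(n-1-1)|) ≤ ((n:ℝ)+1)^2 * R^n := by
      rw [h1, h1']
      have hb : |((n-1:ℕ):ℝ)| * |t^(n-1-1)| ≤ ((n:ℝ)+1) * R^n := by
        rw [h1']
        apply mul_le_mul hn1 h2 (abs_nonneg _) (by linarith [Nat.cast_nonneg (α := ℝ) n])
      rw [h1'] at hb
      calc (n:ℝ) * (((n-1:ℕ):ℝ) * |t^(n-1-1)|) ≤ ((n:ℝ)+1) * (((n:ℝ)+1) * R^n) := by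
            apply mul_le_mul (by linarith [Nat.cast_nonneg (α := ℝ) n]) hb
            · positivity
            · linarith [Nat.cast_nonneg (α := ℝ) n]
      _ = ((n:ℝ)+1)^2 * R^n := by ring
    calc |coeff (m,n)| * (|(n:ℝ)| * (|((n-1:ℕ):ℝ)| * |t^(n-1-1)|))
        ≤ |coeff (m,n)| * (((n:ℝ)+1)^2 * R^n) := mul_le_mul_of_nonneg_left h3 (abs_nonneg _)
    _ = ((n:ℝ)+1)^2 * |coeff (m,n)| * R^n := by ring
  · apply Summable.of_norm_bounded (hgood 1 R hR0)
    rintro ⟨m, n⟩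
    simp only [Real.norm_eq_abs, abs_mul, pow_one]
    have h1 : |(n:ℝ)| = (n:ℝ) := abs_of_nonneg (by positivity)
    have h2 : |y₀^(n-1)| ≤ R^n := by
      rw [abs_pow]; exact pow_sub_le (abs_nonneg _) (hmem y₀ hy₀) hR1 n 1
    calc |coeff (m,n)| * (|(n:ℝ)| * |y₀^(n-1)|)
        ≤ |coeff (m,n)| * (((n:ℝ)+1) * R^n) := by
          apply mul_le_mul_of_nonneg_left _ (abs_nonneg _)
          rw [h1]
          apply mul_le_mul (by linarith) h2 (abs_nonneg _) (by linarith [Nat.cast_nonneg (α := ℝ) n])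
    _ = ((n:ℝ)+1) * |coeff (m,n)| * R^n := by ring

lemma Akey (b c e : ℝ) (he : ∀ k : ℕ, e ≠ -(k : ℝ)) (m k : ℕ) :
    Acoef b c e (m, k) = (((k:ℝ)+1) * (e + (m:ℝ) + k)) * Acoef b c e (m, k+1) := by
  have hpoch : poch e (m + (k+1)) = poch e (m+k) * (e + ((m+k:ℕ):ℝ)) := by
    rw [show m + (k+1) = (m+k)+1 by omega]; exact poch_succ _ _
  have hne1 : poch e (m+k) ≠ 0 := poch_ne_zero he _
  have hne2 : e + ((m+k:ℕ):ℝ) ≠ 0 := by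
    intro h; exact he (m+k) (by linarith)
  have hkf : (((k+1).factorial :ℕ) : ℝ) = ((k:ℝ)+1) * (k.factorial:ℝ) := by
    rw [Nat.factorial_succ]; push_cast; ring
  have hmf : ((m.factorial:ℕ):ℝ) ≠ 0 := by positivity
  have hkf0 : ((k.factorial:ℕ):ℝ) ≠ 0 := by positivity
  have hk1 : ((k:ℝ)+1) ≠ 0 := by positivity
  dsimp only [Acoef]
  rw [hpoch, hkf]
  push_cast at hne2 ⊢
  field_simp
  ring

/-- The Humbert function `z(x,y) = Ξ₂(b,c;e;x,y)` satisfies, for `|x| < 1` and all `y`,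
`y z_yy + x z_xy + e z_y - z = 0`. -/
theorem Xi2_pde_second (b c e : ℝ) (he : ∀ k : ℕ, e ≠ -(k : ℝ))
    (x y : ℝ) (hx : |x| < 1) :
    y * deriv (deriv (fun y' : ℝ => Xi2 b c e x y')) y +
      x * deriv (fun y' : ℝ => deriv (fun x' : ℝ => Xi2 b c e x' y') x) y +
      e * deriv (fun y' : ℝ => Xi2 b c e x y') y -
      Xi2 b c e x y = 0 := by
  have hx0 : 0 ≤ |x| := abs_nonneg x
  obtain ⟨q', hq'0, hxq, hq'1⟩ : ∃ q' : ℝ, 0 < q' ∧ |x| < q' ∧ q' < 1 :=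
    ⟨(1 + |x|)/2, by linarith, by linarith, by linarith⟩
  have M : ∀ (p : ℕ) (r : ℝ), 0 ≤ r →
      Summable (fun mn : ℕ × ℕ =>
        ((mn.1:ℝ)+mn.2+1)^p * |Acoef b c e mn| * q'^mn.1 * r^mn.2) :=
    fun p r hr => master b c e he p hq'0 hq'1 hr
  -- good families
  have good0 : ∀ (p : ℕ) (r : ℝ), 0 ≤ r →
      Summable (fun mn : ℕ × ℕ =>
        ((mn.2:ℝ)+1)^p * |Acoef b c e mn * x^mn.1| * r^mn.2) := by
    intro p r hr
    apply Summable.of_nonneg_of_le (fun mn => by positivity) _ (M p r hr)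
    rintro ⟨m, n⟩
    simp only [abs_mul, abs_pow]
    have h1 : ((n:ℝ)+1)^p ≤ ((m:ℝ)+(n:ℝ)+1)^p :=
      pow_le_pow_left₀ (by positivity) (by linarith [Nat.cast_nonneg (α := ℝ) m]) p
    have h2 : |x|^m ≤ q'^m := pow_le_pow_left₀ hx0 hxq.le m
    calc ((n:ℝ)+1)^p * (|Acoef b c e (m,n)| * |x|^m) * r^n
        ≤ ((m:ℝ)+(n:ℝ)+1)^p * (|Acoef b c e (m,n)| * q'^m) * r^n := by
          apply mul_le_mul_of_nonneg_right _ (by positivity)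
          exact mul_le_mul h1 (mul_le_mul_of_nonneg_left h2 (abs_nonneg _))
            (by positivity) (by positivity)
    _ = ((m:ℝ)+(n:ℝ)+1)^p * |Acoef b c e (m,n)| * q'^m * r^n := by ring
  have hq'inv : ∀ m : ℕ, q'^(m-1) ≤ (1/q') * q'^m := by
    intro m
    cases m with
    | zero =>
        simp only [Nat.zero_sub, pow_zero, mul_one]
        rw [le_div_iff₀ hq'0, one_mul]
        exact hq'1.le
    | succ j =>
        rw [show (j+1) - 1 = j from rfl, pow_succ]
        field_simp
        exact le_rfl
  have good3 : ∀ (p : ℕ) (r : ℝ), 0 ≤ r →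
      Summable (fun mn : ℕ × ℕ =>
        ((mn.2:ℝ)+1)^p * |Acoef b c e mn * ((mn.1:ℝ) * x^(mn.1-1))| * r^mn.2) := by
    intro p r hr
    apply Summable.of_nonneg_of_le (fun mn => by positivity) _ ((M (p+1) r hr).mul_left (1/q'))
    rintro ⟨m, n⟩
    simp only [abs_mul, abs_pow]
    have hmabs : |(m:ℝ)| = (m:ℝ) := abs_of_nonneg (by positivity)
    have h1 : ((n:ℝ)+1)^p ≤ ((m:ℝ)+(n:ℝ)+1)^p :=
      pow_le_pow_left₀ (by positivity) (by linarith [Nat.cast_nonneg (α := ℝ) m]) p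
    have h2 : |x|^(m-1) ≤ (1/q') * q'^m :=
      le_trans (pow_le_pow_left₀ hx0 hxq.le _) (hq'inv m)
    have h3 : |(m:ℝ)| * |x|^(m-1) ≤ ((m:ℝ)+(n:ℝ)+1) * ((1/q') * q'^m) := by
      rw [hmabs]
      apply mul_le_mul (by linarith [Nat.cast_nonneg (α := ℝ) n]) h2 (by positivity)
        (by positivity)
    calc ((n:ℝ)+1)^p * (|Acoef b c e (m,n)| * (|(m:ℝ)| * |x|^(m-1))) * r^n
        ≤ ((m:ℝ)+(n:ℝ)+1)^p * (|Acoef b c e (m,n)| * (((m:ℝ)+(n:ℝ)+1) * ((1/q') * q'^m))) * r^n := by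
          apply mul_le_mul_of_nonneg_right _ (by positivity)
          exact mul_le_mul h1 (mul_le_mul_of_nonneg_left h3 (abs_nonneg _))
            (by positivity) (by positivity)
    _ = (1/q') * (((m:ℝ)+(n:ℝ)+1)^(p+1) * |Acoef b c e (m,n)| * q'^m * r^n) := by ring
  -- rewrite Xi2 as tsum
  have hXi : ∀ u w : ℝ, Xi2 b c e u w
      = ∑' mn : ℕ × ℕ, Acoef b c e mn * u ^ mn.1 * w ^ mn.2 := fun _ _ => rfl
  -- first y-derivative
  have hD1 : deriv (fun y' : ℝ => Xi2 b c e x y')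
      = fun t : ℝ => ∑' mn : ℕ × ℕ,
          (Acoef b c e mn * x^mn.1) * ((mn.2:ℝ) * t^(mn.2-1)) :=
    funext fun t => (deriv1 (fun mn => Acoef b c e mn * x^mn.1) good0 t).deriv
  -- second y-derivative
  have hD2 : deriv (deriv (fun y' : ℝ => Xi2 b c e x y')) y
      = ∑' mn : ℕ × ℕ, (Acoef b c e mn * x^mn.1) *
          ((mn.2:ℝ) * (((mn.2-1:ℕ):ℝ) * y^(mn.2-1-1))) := by
    rw [hD1]
    exact (deriv2 (fun mn => Acoef b c e mn * x^mn.1) good0 y).deriv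
  -- x-derivative
  have hx3 : ∀ y' : ℝ, HasDerivAt (fun x' : ℝ => Xi2 b c e x' y')
      (∑' mn : ℕ × ℕ, Acoef b c e mn * ((mn.1:ℝ) * x^(mn.1-1)) * y'^mn.2) x := by
    intro y'
    have hxball : x ∈ Metric.ball (0:ℝ) q' := by
      simp only [Metric.mem_ball, Real.dist_eq, sub_zero]
      exact hxq
    apply hasDerivAt_tsum_of_isPreconnected
      (u := fun mn : ℕ × ℕ =>
        (1/q') * (((mn.1:ℝ)+mn.2+1)^1 * |Acoef b c e mn| * q'^mn.1 * |y'|^mn.2))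
      ((M 1 |y'| (abs_nonneg _)).mul_left (1/q'))
      Metric.isOpen_ball (convex_ball (0:ℝ) q').isPreconnected
      (fun mn x' _ =>
        ((hasDerivAt_pow mn.1 x').const_mul (Acoef b c e mn)).mul_const (y'^mn.2))
      ?_ hxball ?_ hxball
    · rintro ⟨m, n⟩ x' hx'
      have hx'q : |x'| ≤ q' := by
        simp only [Metric.mem_ball, Real.dist_eq, sub_zero] at hx'
        exact hx'.le
      simp only [Real.norm_eq_abs, abs_mul, abs_pow]
      have hmabs : |(m:ℝ)| = (m:ℝ) := abs_of_nonneg (by positivity)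
      have h2 : |x'|^(m-1) ≤ (1/q') * q'^m :=
        le_trans (pow_le_pow_left₀ (abs_nonneg _) hx'q _) (hq'inv m)
      have h3 : |(m:ℝ)| * |x'|^(m-1) ≤ ((m:ℝ)+(n:ℝ)+1)^1 * ((1/q') * q'^m) := by
        rw [hmabs, pow_one]
        apply mul_le_mul (by linarith [Nat.cast_nonneg (α := ℝ) n]) h2 (by positivity)
          (by positivity)
      calc |Acoef b c e (m,n)| * (|(m:ℝ)| * |x'|^(m-1)) * |y'|^n
          ≤ |Acoef b c e (m,n)| * (((m:ℝ)+(n:ℝ)+1)^1 * ((1/q') * q'^m)) * |y'|^n := by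
            apply mul_le_mul_of_nonneg_right _ (by positivity)
            exact mul_le_mul_of_nonneg_left h3 (abs_nonneg _)
      _ = (1/q') * (((m:ℝ)+(n:ℝ)+1)^1 * |Acoef b c e (m,n)| * q'^m * |y'|^n) := by ring
    · apply Summable.of_norm_bounded (M 0 |y'| (abs_nonneg _))
      rintro ⟨m, n⟩
      simp only [Real.norm_eq_abs, abs_mul, abs_pow, pow_zero, one_mul]
      have h2 : |x|^m ≤ q'^m := pow_le_pow_left₀ hx0 hxq.le m
      apply mul_le_mul_of_nonneg_right _ (by positivity)
      exact mul_le_mul_of_nonneg_left h2 (abs_nonneg _)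
  have hE : (fun y' : ℝ => deriv (fun x' : ℝ => Xi2 b c e x' y') x)
      = fun t : ℝ => ∑' mn : ℕ × ℕ,
          (Acoef b c e mn * ((mn.1:ℝ) * x^(mn.1-1))) * t^mn.2 :=
    funext fun y' => (hx3 y').deriv
  have hD3 : deriv (fun y' : ℝ => deriv (fun x' : ℝ => Xi2 b c e x' y') x) y
      = ∑' mn : ℕ × ℕ, (Acoef b c e mn * ((mn.1:ℝ) * x^(mn.1-1))) *
          ((mn.2:ℝ) * y^(mn.2-1)) := by
    rw [hE]
    exact (deriv1 (fun mn => Acoef b c e mn * ((mn.1:ℝ) * x^(mn.1-1))) good3 y).deriv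
  have hD1y : deriv (fun y' : ℝ => Xi2 b c e x y') y
      = ∑' mn : ℕ × ℕ, (Acoef b c e mn * x^mn.1) * ((mn.2:ℝ) * y^(mn.2-1)) := by
    rw [hD1]
  -- rewrite the goal
  rw [hD2, hD3, hD1y, hXi x y]
  set t2 : ℕ × ℕ → ℝ := fun mn => (Acoef b c e mn * x^mn.1) *
      ((mn.2:ℝ) * (((mn.2-1:ℕ):ℝ) * y^(mn.2-1-1))) with ht2def
  set t3 : ℕ × ℕ → ℝ := fun mn => (Acoef b c e mn * ((mn.1:ℝ) * x^(mn.1-1))) *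
      ((mn.2:ℝ) * y^(mn.2-1)) with ht3def
  set t1 : ℕ × ℕ → ℝ := fun mn => (Acoef b c e mn * x^mn.1) *
      ((mn.2:ℝ) * y^(mn.2-1)) with ht1def
  set t0 : ℕ × ℕ → ℝ := fun mn => Acoef b c e mn * x^mn.1 * y^mn.2 with ht0def
  -- summabilities at y
  obtain ⟨R, hR1, hyR⟩ : ∃ R : ℝ, 1 ≤ R ∧ |y| ≤ R :=
    ⟨|y|+1, by linarith [abs_nonneg y], by linarith [abs_nonneg y]⟩
  have hR0 : 0 ≤ R := by linarith
  have hncast : ∀ n : ℕ, |((n:ℕ):ℝ)| = (n:ℝ) := fun n => abs_of_nonneg (by positivity)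
  have hS0 : Summable t0 := by
    rw [ht0def]
    apply Summable.of_norm_bounded (good0 0 R hR0)
    rintro ⟨m, n⟩
    rw [Real.norm_eq_abs, abs_mul]
    calc |Acoef b c e (m,n) * x^m| * |y^n|
        ≤ |Acoef b c e (m,n) * x^m| * R^n := by
          apply mul_le_mul_of_nonneg_left _ (abs_nonneg _)
          rw [abs_pow]
          exact pow_sub_le (abs_nonneg y) hyR hR1 n 0
    _ = ((n:ℝ)+1)^0 * |Acoef b c e (m,n) * x^m| * R^n := by ring
  have hy1bound : ∀ n : ℕ, |(n:ℝ) * y^(n-1)| ≤ ((n:ℝ)+1)^1 * R^n := by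
    intro n
    rw [abs_mul, abs_pow, hncast, pow_one]
    apply mul_le_mul (by linarith) (pow_sub_le (abs_nonneg y) hyR hR1 n 1)
      (by positivity) (by linarith [Nat.cast_nonneg (α := ℝ) n])
  have hS1 : Summable t1 := by
    rw [ht1def]
    apply Summable.of_norm_bounded (good0 1 R hR0)
    rintro ⟨m, n⟩
    rw [Real.norm_eq_abs, abs_mul]
    calc |Acoef b c e (m,n) * x^m| * |(n:ℝ) * y^(n-1)|
        ≤ |Acoef b c e (m,n) * x^m| * (((n:ℝ)+1)^1 * R^n) :=
          mul_le_mul_of_nonneg_left (hy1bound n) (abs_nonneg _)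
    _ = ((n:ℝ)+1)^1 * |Acoef b c e (m,n) * x^m| * R^n := by ring
  have hS3 : Summable t3 := by
    rw [ht3def]
    apply Summable.of_norm_bounded (good3 1 R hR0)
    rintro ⟨m, n⟩
    rw [Real.norm_eq_abs, abs_mul]
    calc |Acoef b c e (m,n) * ((m:ℝ) * x^(m-1))| * |(n:ℝ) * y^(n-1)|
        ≤ |Acoef b c e (m,n) * ((m:ℝ) * x^(m-1))| * (((n:ℝ)+1)^1 * R^n) :=
          mul_le_mul_of_nonneg_left (hy1bound n) (abs_nonneg _)
    _ = ((n:ℝ)+1)^1 * |Acoef b c e (m,n) * ((m:ℝ) * x^(m-1))| * R^n := by ring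
  have hS2 : Summable t2 := by
    rw [ht2def]
    apply Summable.of_norm_bounded (good0 2 R hR0)
    rintro ⟨m, n⟩
    rw [Real.norm_eq_abs, abs_mul]
    have hb : |(n:ℝ) * (((n-1:ℕ):ℝ) * y^(n-1-1))| ≤ ((n:ℝ)+1)^2 * R^n := by
      rw [abs_mul, abs_mul, abs_pow, hncast, hncast]
      have hyn : |y|^(n-1-1) ≤ R^n := by
        rw [Nat.sub_sub]; exact pow_sub_le (abs_nonneg y) hyR hR1 n 2
      have hn1 : ((n-1:ℕ):ℝ) ≤ (n:ℝ)+1 := by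
        have := Nat.sub_le n 1
        calc ((n-1:ℕ):ℝ) ≤ (n:ℝ) := by exact_mod_cast this
        _ ≤ (n:ℝ)+1 := by linarith
      have hinner : ((n-1:ℕ):ℝ) * |y|^(n-1-1) ≤ ((n:ℝ)+1) * R^n :=
        mul_le_mul hn1 hyn (by positivity) (by linarith [Nat.cast_nonneg (α := ℝ) n])
      calc (n:ℝ) * (((n-1:ℕ):ℝ) * |y|^(n-1-1)) ≤ ((n:ℝ)+1) * (((n:ℝ)+1) * R^n) := by
            apply mul_le_mul (by linarith [Nat.cast_nonneg (α := ℝ) n]) hinner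
            · positivity
            · linarith [Nat.cast_nonneg (α := ℝ) n]
      _ = ((n:ℝ)+1)^2 * R^n := by ring
    calc |Acoef b c e (m,n) * x^m| * |(n:ℝ) * (((n-1:ℕ):ℝ) * y^(n-1-1))|
        ≤ |Acoef b c e (m,n) * x^m| * (((n:ℝ)+1)^2 * R^n) :=
          mul_le_mul_of_nonneg_left hb (abs_nonneg _)
    _ = ((n:ℝ)+1)^2 * |Acoef b c e (m,n) * x^m| * R^n := by ring
  -- telescoping
  set G' : ℕ × ℕ → ℝ := fun mn =>
      if mn.2 = 0 then 0 else Acoef b c e (mn.1, mn.2-1) * x^mn.1 * y^(mn.2-1) with hG'def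
  have hterm : ∀ mn : ℕ × ℕ,
      y * t2 mn + x * t3 mn + e * t1 mn - t0 mn = G' mn - t0 mn := by
    rintro ⟨m, n⟩
    rw [ht2def, ht3def, ht1def, ht0def, hG'def]
    cases n with
    | zero => simp
    | succ k =>
        simp only [if_neg (Nat.succ_ne_zero k), Nat.add_sub_cancel]
        have hky : (k:ℝ) * (y * y^(k-1)) = (k:ℝ) * y^k := by
          cases k with
          | zero => simp
          | succ j =>
              rw [show (j+1) - 1 = j from rfl]
              rw [← pow_succ']
        have hmx : (m:ℝ) * (x * x^(m-1)) = (m:ℝ) * x^m := by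
          cases m with
          | zero => simp
          | succ j =>
              rw [show (j+1) - 1 = j from rfl]
              rw [← pow_succ']
        rw [Akey b c e he m k]
        push_cast
        linear_combination
          (Acoef b c e (m, k+1) * x^m * ((k:ℝ)+1)) * hky +
          (Acoef b c e (m, k+1) * ((k:ℝ)+1) * y^k) * hmx
  have hinj : Function.Injective (fun mn : ℕ × ℕ => ((mn.1, mn.2+1) : ℕ × ℕ)) := by
    rintro ⟨a, b1⟩ ⟨c1, d⟩ h
    simp only [Prod.mk.injEq] at h
    exact Prod.ext h.1 (by omega)
  have hcomp : ∀ mn : ℕ × ℕ, G' (mn.1, mn.2+1) = t0 mn := by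
    rintro ⟨m, n⟩
    rw [hG'def, ht0def]
    simp [Nat.add_sub_cancel]
  have hsupp : Function.support G' ⊆ Set.range (fun mn : ℕ × ℕ => ((mn.1, mn.2+1) : ℕ × ℕ)) := by
    intro mn hmn
    by_cases h0 : mn.2 = 0
    · exfalso; apply hmn; rw [hG'def]; simp [h0]
    · exact ⟨(mn.1, mn.2-1), Prod.ext rfl (by simp; omega)⟩
  have hvan : ∀ mn ∉ Set.range (fun mn : ℕ × ℕ => ((mn.1, mn.2+1) : ℕ × ℕ)), G' mn = 0 := by
    intro mn h
    by_contra hne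
    exact h (hsupp hne)
  have hG'sum : Summable G' := by
    apply (hinj.summable_iff hvan).1
    exact hS0.congr (fun mn => (hcomp mn).symm)
  have htel : ∑' mn : ℕ × ℕ, G' mn = ∑' mn : ℕ × ℕ, t0 mn := by
    rw [← hinj.tsum_eq hsupp]
    exact tsum_congr hcomp
  have key : ∑' mn : ℕ × ℕ, (y * t2 mn + x * t3 mn + e * t1 mn - t0 mn) = 0 := by
    rw [tsum_congr hterm, Summable.tsum_sub hG'sum hS0, htel, sub_self]
  rw [← tsum_mul_left, ← tsum_mul_left, ← tsum_mul_left,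
    ← Summable.tsum_add (hS2.mul_left y) (hS3.mul_left x),
    ← Summable.tsum_add ((hS2.mul_left y).add (hS3.mul_left x)) (hS1.mul_left e),
    ← Summable.tsum_sub (((hS2.mul_left y).add (hS3.mul_left x)).add (hS1.mul_left e)) hS0]
  exact key

end
end

section
/- Let b, c, d, e, g be real (or complex) parameters with e and g not nonpositive integers. Then the double series ∑_{m,n≥0} (b)_m (c)_m (d)_n / ((e)_{m+n} (g)_n m! n!) · x^m y^n defining F^{0;2;1}_{1;0;1}[-: b,c; d; e: -; g; x,y] converges absolutely for every x with |x| < 1 and every y (i.e. the region of convergence is |x| < 1, |y| < ∞, in accordance with the conditions p+q < l+m+1 failing but p+q = l+m+1 with p+k < l+n+1 for p=0, q=2, k=1, l=1, m=0, n=1). -/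
noncomputable section

open Finset Nat

/-- `∏_{i<k} (A+i) ≤ k! (k+A+1)^A` in `ℕ`. -/
lemma aux_prod_le (A k : ℕ) : (∏ i ∈ range k, (A + i)) ≤ k ! * (k + A + 1) ^ A := by
  have h1 : (∏ i ∈ range k, (A + i)) ≤ ∏ i ∈ range k, (A + i + 1) :=
    Finset.prod_le_prod (fun i _ => Nat.zero_le _) (fun i _ => Nat.le_succ _)
  have h2 : A ! * ∏ i ∈ range k, (A + i + 1) = (A + k)! := by
    rw [← Finset.prod_range_add_one_eq_factorial (A + k), Finset.prod_range_add,
      Finset.prod_range_add_one_eq_factorial]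
  have h3 : (A + k)! = k ! * ∏ j ∈ range A, (k + j + 1) := by
    rw [← Finset.prod_range_add_one_eq_factorial (A + k), Nat.add_comm A k,
      Finset.prod_range_add, Finset.prod_range_add_one_eq_factorial]
  have h4 : (∏ j ∈ range A, (k + j + 1)) ≤ (k + A + 1) ^ A := by
    calc (∏ j ∈ range A, (k + j + 1)) ≤ (k + A + 1) ^ (range A).card :=
          Finset.prod_le_pow_card _ _ _ (fun j hj => by
            have := Finset.mem_range.1 hj; omega)
      _ = (k + A + 1) ^ A := by rw [Finset.card_range]
  calc (∏ i ∈ range k, (A + i)) ≤ ∏ i ∈ range k, (A + i + 1) := h1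
    _ ≤ A ! * ∏ i ∈ range k, (A + i + 1) :=
        Nat.le_mul_of_pos_left _ (Nat.factorial_pos A)
    _ = k ! * ∏ j ∈ range A, (k + j + 1) := by rw [h2, h3]
    _ ≤ k ! * (k + A + 1) ^ A := Nat.mul_le_mul_left _ h4

/-- `n! ≤ (n-N)! (n+1)^N` in `ℕ`. -/
lemma aux_factorial_le (N n : ℕ) : n ! ≤ (n - N)! * (n + 1) ^ N := by
  induction N with
  | zero => simp
  | succ N ih =>
      have hstep : (n - N)! ≤ (n + 1) * (n - (N + 1))! := by
        rcases Nat.eq_zero_or_pos (n - N) with h | h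
        · have h' : n - (N + 1) = 0 := by omega
          rw [h, h']
          simp
        · have h' : n - N = (n - (N + 1)) + 1 := by omega
          rw [h', Nat.factorial_succ]
          exact Nat.mul_le_mul_right _ (by omega)
      calc n ! ≤ (n - N)! * (n + 1) ^ N := ih
        _ ≤ ((n + 1) * (n - (N + 1))!) * (n + 1) ^ N := Nat.mul_le_mul_right _ hstep
        _ = (n - (N + 1))! * (n + 1) ^ (N + 1) := by ring

/-- Upper bound on `|poch a k|`. -/
lemma abs_poch_le (a : ℝ) (A : ℕ) (hA : |a| ≤ A) (k : ℕ) :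
    |poch a k| ≤ (k ! : ℝ) * ((k : ℝ) + A + 1) ^ A := by
  have h1 : |poch a k| ≤ ((∏ i ∈ range k, (A + i) : ℕ) : ℝ) := by
    rw [poch, Finset.abs_prod]
    push_cast
    refine Finset.prod_le_prod (fun i _ => abs_nonneg _) (fun i _ => ?_)
    calc |a + (i : ℝ)| ≤ |a| + |(i : ℝ)| := abs_add_le _ _
      _ ≤ (A : ℝ) + i := by
          rw [abs_of_nonneg (by positivity : (0:ℝ) ≤ (i:ℝ))]
          linarith
  calc |poch a k| ≤ ((∏ i ∈ range k, (A + i) : ℕ) : ℝ) := h1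
    _ ≤ ((k ! * (k + A + 1) ^ A : ℕ) : ℝ) := by exact_mod_cast aux_prod_le A k
    _ = (k ! : ℝ) * ((k : ℝ) + A + 1) ^ A := by push_cast; ring

/-- Lower bound on `|poch e k|` when `e` is not a nonpositive integer. -/
lemma abs_poch_lower (e : ℝ) (he : ∀ k : ℕ, e ≠ -(k : ℝ)) :
    ∃ N : ℕ, ∃ c : ℝ, 0 < c ∧ ∀ k : ℕ, c * ((k - N)! : ℝ) ≤ |poch e k| := by
  set N : ℕ := ⌈|e|⌉₊ + 1 with hN
  have hterm : ∀ i : ℕ, 0 < |e + i| := by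
    intro i
    rw [abs_pos]
    intro h0
    exact he i (by linarith)
  set c : ℝ := ∏ i ∈ range N, min |e + i| 1 with hc
  have hcpos : 0 < c := Finset.prod_pos fun i _ => lt_min (hterm i) one_pos
  refine ⟨N, c, hcpos, fun k => ?_⟩
  have habs : |poch e k| = ∏ i ∈ range k, |e + i| := by rw [poch, Finset.abs_prod]
  rcases le_or_gt k N with hk | hk
  · have hsub : k - N = 0 := by omega
    rw [hsub, habs]
    simp only [Nat.factorial_zero, Nat.cast_one, mul_one]
    have hsplit : c = (∏ i ∈ range k, min |e + i| 1) *
        ∏ i ∈ range (N - k), min |e + ((k + i : ℕ) : ℝ)| 1 := by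
      rw [hc, show N = k + (N - k) by omega, Finset.prod_range_add,
        Nat.add_sub_cancel_left]
    calc c ≤ (∏ i ∈ range k, min |e + i| 1) * 1 := by
          rw [hsplit]
          refine mul_le_mul_of_nonneg_left ?_
            (Finset.prod_nonneg fun i _ => le_min (abs_nonneg _) zero_le_one)
          exact Finset.prod_le_one (fun i _ => le_min (abs_nonneg _) zero_le_one)
            (fun i _ => min_le_right _ _)
      _ = ∏ i ∈ range k, min |e + i| 1 := mul_one _
      _ ≤ ∏ i ∈ range k, |e + i| :=
          Finset.prod_le_prod (fun i _ => le_min (abs_nonneg _) zero_le_one)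
            (fun i _ => min_le_left _ _)
  · have hsplit : |poch e k| = (∏ i ∈ range N, |e + i|) *
        ∏ i ∈ range (k - N), |e + ((N + i : ℕ) : ℝ)| := by
      rw [habs, show k = N + (k - N) by omega, Finset.prod_range_add,
        Nat.add_sub_cancel_left]
    have hNe : (|e| : ℝ) + 1 ≤ N := by
      have := Nat.le_ceil |e|
      rw [hN]
      push_cast
      linarith
    have hsecond : ((k - N)! : ℝ) ≤ ∏ i ∈ range (k - N), |e + ((N + i : ℕ) : ℝ)| := by
      rw [← Finset.prod_range_add_one_eq_factorial, Nat.cast_prod]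
      refine Finset.prod_le_prod (fun i _ => by positivity) (fun i _ => ?_)
      have hcast : ((N + i : ℕ) : ℝ) = (N : ℝ) + i := by push_cast; ring
      have h1 : (i : ℝ) + 1 ≤ e + ((N + i : ℕ) : ℝ) := by
        rw [hcast]
        have h2 : -|e| ≤ e := neg_abs_le e
        linarith
      have hcast2 : (((i + 1 : ℕ)) : ℝ) = (i : ℝ) + 1 := by push_cast; ring
      rw [hcast2]
      exact h1.trans (le_abs_self _)
    have hfirst : c ≤ ∏ i ∈ range N, |e + i| :=
      Finset.prod_le_prod (fun i _ => le_min (abs_nonneg _) zero_le_one)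
        (fun i _ => min_le_left _ _)
    calc c * ((k - N)! : ℝ) ≤ (∏ i ∈ range N, |e + i|) *
          ∏ i ∈ range (k - N), |e + ((N + i : ℕ) : ℝ)| := by
          refine mul_le_mul hfirst hsecond (by positivity)
            (Finset.prod_nonneg fun i _ => abs_nonneg _)
      _ = |poch e k| := hsplit.symm

/-- Polynomial times geometric is summable. -/
lemma summable_pol_geom (P : ℕ) (r : ℝ) (hr0 : 0 ≤ r) (hr : r < 1) :
    Summable (fun m : ℕ => ((m : ℝ) + 1) ^ P * r ^ m) := by
  rcases eq_or_lt_of_le hr0 with h | h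
  · refine summable_of_ne_finset_zero (s := {0}) (fun m hm => ?_)
    have hm0 : m ≠ 0 := by simpa using hm
    rw [← h, zero_pow hm0, mul_zero]
  · have hF : Summable (fun n : ℕ => (n : ℝ) ^ P * r ^ n) :=
      summable_pow_mul_geometric_of_norm_lt_one P
        (by rwa [Real.norm_eq_abs, abs_of_nonneg hr0])
    have hF1 : Summable (fun n : ℕ => ((n + 1 : ℕ) : ℝ) ^ P * r ^ (n + 1)) :=
      (summable_nat_add_iff 1).2 hF
    refine (hF1.div_const r).congr (fun n => ?_)
    have hrne : r ≠ 0 := ne_of_gt h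
    push_cast
    rw [pow_succ]
    field_simp

/-- Polynomial times `t^n/n!` is summable. -/
lemma summable_pol_fact (Q : ℕ) (t : ℝ) (ht : 0 ≤ t) :
    Summable (fun n : ℕ => ((n : ℝ) + 1) ^ Q * t ^ n / n !) := by
  refine Summable.of_nonneg_of_le (fun n => by positivity) (fun n => ?_)
    (Real.summable_pow_div_factorial (2 ^ Q * t))
  have h1 : ((n : ℝ) + 1) ≤ 2 ^ n := by
    have h := Nat.lt_two_pow_self (n := n)
    have h' : n + 1 ≤ 2 ^ n := h
    exact_mod_cast h'
  have h2 : ((n : ℝ) + 1) ^ Q * t ^ n ≤ (2 ^ Q * t) ^ n := by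
    calc ((n : ℝ) + 1) ^ Q * t ^ n ≤ ((2 : ℝ) ^ n) ^ Q * t ^ n := by
          gcongr
      _ = (2 ^ Q * t) ^ n := by
          rw [mul_pow, ← pow_mul, ← pow_mul, Nat.mul_comm]
  gcongr

set_option maxHeartbeats 2000000 in
/-- The double series defining `F^{0;2;1}_{1;0;1}[-: b,c; d; e: -; g; x,y]` converges
absolutely for every `x` with `|x| < 1` and every `y`, provided `e` and `g` are not
nonpositive integers. -/
theorem F021_summable (b c d e g : ℝ)
    (he : ∀ k : ℕ, e ≠ -(k : ℝ)) (hg : ∀ k : ℕ, g ≠ -(k : ℝ))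
    (x y : ℝ) (hx : |x| < 1) :
    Summable (fun mn : ℕ × ℕ =>
      |poch b mn.1 * poch c mn.1 * poch d mn.2 /
          (poch e (mn.1 + mn.2) * poch g mn.2 * mn.1.factorial * mn.2.factorial) *
          x ^ mn.1 * y ^ mn.2|) := by
  obtain ⟨N, cE, hcE, hEbd⟩ := abs_poch_lower e he
  obtain ⟨M, cG, hcG, hGbd⟩ := abs_poch_lower g hg
  have hxb : |b| ≤ (⌈|b|⌉₊ : ℝ) := Nat.le_ceil _
  have hxc : |c| ≤ (⌈|c|⌉₊ : ℝ) := Nat.le_ceil _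
  have hxd : |d| ≤ (⌈|d|⌉₊ : ℝ) := Nat.le_ceil _
  set B := ⌈|b|⌉₊
  set C := ⌈|c|⌉₊
  set D := ⌈|d|⌉₊
  have hfs : Summable (fun m : ℕ => ((m : ℝ) + 1) ^ (B + C + N) * |x| ^ m) :=
    summable_pol_geom (B + C + N) |x| (abs_nonneg x) hx
  have hgs : Summable (fun n : ℕ => ((n : ℝ) + 1) ^ (D + M) * |y| ^ n / n !) :=
    summable_pol_fact (D + M) |y| (abs_nonneg y)
  set K : ℝ := (((B : ℝ) + 1) ^ B * ((C : ℝ) + 1) ^ C * ((D : ℝ) + 1) ^ D) / (cE * cG)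
    with hK
  have hsum : Summable (fun mn : ℕ × ℕ =>
      K * ((((mn.1 : ℝ) + 1) ^ (B + C + N) * |x| ^ mn.1) *
        (((mn.2 : ℝ) + 1) ^ (D + M) * |y| ^ mn.2 / mn.2 !))) :=
    (hfs.mul_of_nonneg hgs (fun m => by positivity) (fun n => by positivity)).mul_left K
  refine Summable.of_nonneg_of_le (fun mn => abs_nonneg _) (fun mn => ?_) hsum
  obtain ⟨m, n⟩ := mn
  simp only
  -- abbreviations
  have hn0 : (0 : ℝ) < (n ! : ℝ) := by exact_mod_cast Nat.factorial_pos n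
  have hm0 : (0 : ℝ) < (m ! : ℝ) := by exact_mod_cast Nat.factorial_pos m
  have hPe : cE * (((m + n - N)! : ℕ) : ℝ) ≤ |poch e (m + n)| := hEbd (m + n)
  have hPg : cG * (((n - M)! : ℕ) : ℝ) ≤ |poch g n| := hGbd n
  have hPe0 : (0 : ℝ) < |poch e (m + n)| := lt_of_lt_of_le (by positivity) hPe
  have hPg0 : (0 : ℝ) < |poch g n| := lt_of_lt_of_le (by positivity) hPg
  have habs : |poch b m * poch c m * poch d n /
      (poch e (m + n) * poch g n * m ! * n !) * x ^ m * y ^ n|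
      = |poch b m| * |poch c m| * |poch d n| * (|x| ^ m * |y| ^ n) /
        (|poch e (m + n)| * |poch g n| * m ! * n !) := by
    simp only [abs_mul, abs_div, abs_pow, Nat.abs_cast]
    ring
  have hden : (0 : ℝ) < |poch e (m + n)| * |poch g n| * m ! * n ! := by
    have := mul_pos (mul_pos (mul_pos hPe0 hPg0) hm0) hn0
    exact this
  rw [habs, div_le_iff₀ hden]
  have hb1 : |poch b m| ≤ (m ! : ℝ) * ((m : ℝ) + B + 1) ^ B := abs_poch_le b B hxb m
  have hb2 : |poch c m| ≤ (m ! : ℝ) * ((m : ℝ) + C + 1) ^ C := abs_poch_le c C hxc m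
  have hb3 : |poch d n| ≤ (n ! : ℝ) * ((n : ℝ) + D + 1) ^ D := abs_poch_le d D hxd n
  have e1 : (m ! : ℝ) ≤ (((m + n - N)! : ℕ) : ℝ) * ((m : ℝ) + 1) ^ N := by
    have e1n : m ! ≤ (m + n - N)! * (m + 1) ^ N :=
      le_trans (aux_factorial_le N m)
        (Nat.mul_le_mul_right _ (Nat.factorial_le (by omega)))
    exact_mod_cast e1n
  have e2 : (n ! : ℝ) ≤ (((n - M)! : ℕ) : ℝ) * ((n : ℝ) + 1) ^ M := by
    exact_mod_cast aux_factorial_le M n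
  have e3 : ((m : ℝ) + B + 1) ^ B ≤ (((B : ℝ) + 1) * ((m : ℝ) + 1)) ^ B := by
    apply pow_le_pow_left₀ (by positivity)
    have hp : (0:ℝ) ≤ (B : ℝ) * (m : ℝ) := by positivity
    linarith
  have e4 : ((m : ℝ) + C + 1) ^ C ≤ (((C : ℝ) + 1) * ((m : ℝ) + 1)) ^ C := by
    apply pow_le_pow_left₀ (by positivity)
    have hp : (0:ℝ) ≤ (C : ℝ) * (m : ℝ) := by positivity
    linarith
  have e5 : ((n : ℝ) + D + 1) ^ D ≤ (((D : ℝ) + 1) * ((n : ℝ) + 1)) ^ D := by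
    apply pow_le_pow_left₀ (by positivity)
    have hp : (0:ℝ) ≤ (D : ℝ) * (n : ℝ) := by positivity
    linarith
  have key : (m ! : ℝ) * m ! * n ! *
      (((m : ℝ) + B + 1) ^ B * ((m : ℝ) + C + 1) ^ C * ((n : ℝ) + D + 1) ^ D) ≤
      (m ! : ℝ) * ((((m + n - N)! : ℕ) : ℝ) * ((m : ℝ) + 1) ^ N) *
        ((((n - M)! : ℕ) : ℝ) * ((n : ℝ) + 1) ^ M) *
        ((((B : ℝ) + 1) * ((m : ℝ) + 1)) ^ B * (((C : ℝ) + 1) * ((m : ℝ) + 1)) ^ C *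
          (((D : ℝ) + 1) * ((n : ℝ) + 1)) ^ D) := by
    have h12 : (m ! : ℝ) * m ! * n ! ≤
        (m ! : ℝ) * ((((m + n - N)! : ℕ) : ℝ) * ((m : ℝ) + 1) ^ N) *
          ((((n - M)! : ℕ) : ℝ) * ((n : ℝ) + 1) ^ M) := by
      have := mul_le_mul (mul_le_mul_of_nonneg_left e1 (le_of_lt hm0)) e2
        (le_of_lt hn0) (by positivity)
      exact this
    have h345 : ((m : ℝ) + B + 1) ^ B * ((m : ℝ) + C + 1) ^ C * ((n : ℝ) + D + 1) ^ D ≤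
        (((B : ℝ) + 1) * ((m : ℝ) + 1)) ^ B * (((C : ℝ) + 1) * ((m : ℝ) + 1)) ^ C *
          (((D : ℝ) + 1) * ((n : ℝ) + 1)) ^ D := by
      exact mul_le_mul (mul_le_mul e3 e4 (by positivity) (by positivity)) e5
        (by positivity) (by positivity)
    exact mul_le_mul h12 h345 (by positivity) (by positivity)
  calc |poch b m| * |poch c m| * |poch d n| * (|x| ^ m * |y| ^ n)
      ≤ ((m ! : ℝ) * ((m : ℝ) + B + 1) ^ B) * ((m ! : ℝ) * ((m : ℝ) + C + 1) ^ C) *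
        ((n ! : ℝ) * ((n : ℝ) + D + 1) ^ D) * (|x| ^ m * |y| ^ n) := by
        have := mul_le_mul (mul_le_mul (mul_le_mul hb1 hb2 (abs_nonneg _) (by positivity))
          hb3 (abs_nonneg _) (by positivity)) (le_refl (|x| ^ m * |y| ^ n))
          (by positivity) (by positivity)
        exact this
    _ = ((m ! : ℝ) * m ! * n ! *
          (((m : ℝ) + B + 1) ^ B * ((m : ℝ) + C + 1) ^ C * ((n : ℝ) + D + 1) ^ D)) *
          (|x| ^ m * |y| ^ n) := by ring
    _ ≤ ((m ! : ℝ) * ((((m + n - N)! : ℕ) : ℝ) * ((m : ℝ) + 1) ^ N) *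
          ((((n - M)! : ℕ) : ℝ) * ((n : ℝ) + 1) ^ M) *
          ((((B : ℝ) + 1) * ((m : ℝ) + 1)) ^ B * (((C : ℝ) + 1) * ((m : ℝ) + 1)) ^ C *
            (((D : ℝ) + 1) * ((n : ℝ) + 1)) ^ D)) * (|x| ^ m * |y| ^ n) :=
        mul_le_mul_of_nonneg_right key (by positivity)
    _ = K * ((((m : ℝ) + 1) ^ (B + C + N) * |x| ^ m) *
          (((n : ℝ) + 1) ^ (D + M) * |y| ^ n / n !)) *
          ((cE * (((m + n - N)! : ℕ) : ℝ)) * (cG * (((n - M)! : ℕ) : ℝ)) * m ! * n !) := by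
        rw [hK]
        rw [mul_pow, mul_pow, mul_pow, pow_add, pow_add, pow_add]
        field_simp
    _ ≤ K * ((((m : ℝ) + 1) ^ (B + C + N) * |x| ^ m) *
          (((n : ℝ) + 1) ^ (D + M) * |y| ^ n / n !)) *
          (|poch e (m + n)| * |poch g n| * m ! * n !) := by
        have hKnn : (0 : ℝ) ≤ K * ((((m : ℝ) + 1) ^ (B + C + N) * |x| ^ m) *
            (((n : ℝ) + 1) ^ (D + M) * |y| ^ n / n !)) := by
          have hKnn' : (0 : ℝ) ≤ K := by
            rw [hK]
            exact div_nonneg (by positivity) (le_of_lt (mul_pos hcE hcG))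
          positivity
        have hDD : (cE * (((m + n - N)! : ℕ) : ℝ)) * (cG * (((n - M)! : ℕ) : ℝ)) *
            m ! * n ! ≤ |poch e (m + n)| * |poch g n| * m ! * n ! := by
          have h1 := mul_le_mul hPe hPg (by positivity) (le_of_lt hPe0)
          exact mul_le_mul_of_nonneg_right
            (mul_le_mul_of_nonneg_right h1 (le_of_lt hm0)) (le_of_lt hn0)
        exact mul_le_mul_of_nonneg_left hDD hKnn
end
end
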